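/- For all natural numbers b, m, s with b ≥ 2 and m, s ≥ 1, and all real x with 0 ≤ x < 1, we have G_s(x) ≤ 0. -/

import Mathlib

open Finset

/-- The combinatorial binomial coefficient `C(n, j)`, as a real number:
equal to `n.choose j` when `0 ≤ j ≤ n`, and `0` otherwise. -/
noncomputable def C (n j : ℤ) : ℝ :=
  if 0 ≤ j ∧ j ≤ n then (Nat.choose n.toNat j.toNat : ℝ) else 0

/-- The polynomial `G_s(x)` from Wiart–Wong, for parameters `b, m, s`. -/
noncomputable def G (b m s : ℕ) (x : ℝ) : ℝ :=
  ∑ k ∈ Finset.Icc (1 : ℤ) ((m : ℤ) + (s : ℤ) - 1),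
    (∑ r ∈ Finset.Icc (1 : ℤ) (s : ℤ),
        C (s : ℤ) r * C (k - 1) (r - 1) * (((b : ℝ) - 1) / (-(b : ℝ)) ^ r) *
          ∑ i ∈ Finset.Icc (0 : ℤ) (r - 1 - max (k - (m : ℤ)) 0),
            (-(b : ℝ)) ^ i * C (r - 1) i) *
      ((b : ℝ) * x) ^ k

lemma C_natCast (n j : ℕ) : C (n : ℤ) (j : ℤ) = (n.choose j : ℝ) := by
  unfold C
  split_ifs with h
  · simp
  · push_neg at h
    have : n < j := by
      by_contra hc
      exact absurd (h (by positivity)) (by push_neg; exact_mod_cast not_lt.mp hc)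
    rw [Nat.choose_eq_zero_of_lt this]; simp

lemma C_nonneg (n j : ℤ) : 0 ≤ C n j := by
  unfold C; split_ifs <;> positivity

lemma C_eq_zero_of_lt {n j : ℤ} (h : n < j) : C n j = 0 := by
  unfold C; split_ifs with h' <;> [exact absurd h' (by omega); rfl]

lemma C_eq_zero_of_neg {n j : ℤ} (h : j < 0) : C n j = 0 := by
  unfold C; split_ifs with h' <;> [exact absurd h' (by omega); rfl]

lemma C_symm {n : ℤ} (j : ℤ) (hn : 0 ≤ n) : C n j = C n (n - j) := by
  rcases le_or_gt j n with hj | hj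
  · rcases le_or_gt 0 j with hj0 | hj0
    · obtain ⟨N, rfl⟩ := Int.eq_ofNat_of_zero_le hn
      obtain ⟨J, rfl⟩ := Int.eq_ofNat_of_zero_le hj0
      have hJN : J ≤ N := by exact_mod_cast hj
      rw [C_natCast, show ((N:ℤ) - J) = ((N - J : ℕ) : ℤ) by omega, C_natCast,
        Nat.choose_symm hJN]
    · rw [C_eq_zero_of_neg hj0, C_eq_zero_of_lt (by omega)]
  · rw [C_eq_zero_of_lt hj, C_eq_zero_of_neg (by omega)]

-- trinomial revision, all-integer version
lemma C_trinomial {w k i : ℤ} (hw : 0 ≤ w) :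
    C w i * C (w - i) (k - i) = C w k * C k i := by
  rcases lt_or_ge i 0 with hi | hi
  · rw [C_eq_zero_of_neg hi, C_eq_zero_of_neg hi, zero_mul, mul_zero]
  rcases lt_or_ge w i with hwi | hwi
  · rw [C_eq_zero_of_lt hwi, zero_mul]
    rcases le_or_gt k w with hkw | hkw
    · rw [C_eq_zero_of_lt (by omega : k < i), mul_zero]
    · rw [C_eq_zero_of_lt hkw, zero_mul]
  rcases lt_or_ge k i with hki | hki
  · rw [C_eq_zero_of_neg (by omega : k - i < 0), mul_zero, C_eq_zero_of_lt hki, mul_zero]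
  rcases lt_or_ge w k with hwk | hwk
  · rw [C_eq_zero_of_lt (by omega : w - i < k - i), mul_zero, C_eq_zero_of_lt hwk, zero_mul]
  -- now 0 ≤ i ≤ k ≤ w
  obtain ⟨I, rfl⟩ := Int.eq_ofNat_of_zero_le hi
  obtain ⟨K, rfl⟩ := Int.eq_ofNat_of_zero_le (le_trans hi hki)
  obtain ⟨W, rfl⟩ := Int.eq_ofNat_of_zero_le hw
  have hIK : I ≤ K := by exact_mod_cast hki
  have hKW : K ≤ W := by exact_mod_cast hwk
  rw [show ((W:ℤ) - I) = ((W - I : ℕ) : ℤ) by omega,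
    show ((K:ℤ) - I) = ((K - I : ℕ) : ℤ) by omega]
  rw [C_natCast, C_natCast, C_natCast, C_natCast]
  rw [← Nat.cast_mul, ← Nat.cast_mul, Nat.choose_mul hIK]

-- cast sums over Icc from ℤ to ℕ
lemma sum_Icc_cast (a b : ℕ) (f : ℤ → ℝ) :
    ∑ i ∈ Finset.Icc (a : ℤ) (b : ℤ), f i = ∑ i ∈ Finset.Icc a b, f (i : ℤ) := by
  refine Finset.sum_nbij' (fun i => i.toNat) (fun i => (i : ℤ)) ?_ ?_ ?_ ?_ ?_ <;>
      intro i hi <;> simp only [Finset.mem_Icc] at hi ⊢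
  · omega
  · omega
  · omega
  · omega
  · congr 1; omega
lemma alt_prefix (K : ℕ) (hK : 1 ≤ K) (r : ℕ) :
    ∑ i ∈ Finset.range (r + 1), (-1 : ℝ) ^ i * (K.choose i : ℝ)
      = (-1 : ℝ) ^ r * ((K - 1).choose r : ℝ) := by
  induction r with
  | zero => simp
  | succ r ih =>
    rw [Finset.sum_range_succ, ih]
    have hP : K.choose (r + 1) = (K - 1).choose r + (K - 1).choose (r + 1) := by
      have : K = (K - 1) + 1 := by omega
      rw [this, Nat.choose_succ_succ]
      simp
    rw [hP]
    push_cast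
    rw [pow_succ]
    ring

lemma alt_total (K : ℕ) (hK : 1 ≤ K) :
    ∑ i ∈ Finset.range (K + 1), (-1 : ℝ) ^ i * (K.choose i : ℝ) = 0 := by
  have h := Int.alternating_sum_range_choose (n := K)
  rw [if_neg (by omega)] at h
  have : ((∑ i ∈ Finset.range (K + 1), (-1 : ℤ) ^ i * (K.choose i : ℤ) : ℤ) : ℝ) = 0 := by
    rw [h]; norm_num
  rw [← this]
  push_cast
  rfl

lemma alt_suffix (K J : ℕ) (hK : 1 ≤ K) (hJ : 1 ≤ J) :
    ∑ i ∈ Finset.Icc J K, (-1 : ℝ) ^ (K - i) * (K.choose i : ℝ)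
      = (-1 : ℝ) ^ (K - J) * ((K - 1).choose (J - 1) : ℝ) := by
  rcases le_or_gt J K with hJK | hJK
  swap
  · rw [Finset.Icc_eq_empty (by omega), Finset.sum_empty,
      Nat.choose_eq_zero_of_lt (by omega)]
    simp
  have key : ∀ i, i ≤ K → (-1 : ℝ) ^ (K - i) = (-1) ^ K * (-1) ^ i := by
    intro i hi
    have h1 : (-1 : ℝ) ^ K = (-1) ^ (K - i) * (-1) ^ i := by
      rw [← pow_add]; congr 1; omega
    have h2 : ((-1 : ℝ) ^ i) * ((-1) ^ i) = 1 := by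
      rw [← pow_add]; exact Even.neg_one_pow (Even.add_self i)
    calc (-1 : ℝ) ^ (K - i) = (-1) ^ (K - i) * ((-1) ^ i * (-1) ^ i) := by rw [h2, mul_one]
      _ = (-1) ^ K * (-1) ^ i := by rw [h1]; ring
  rw [Finset.sum_congr rfl (fun i hi => by
    rw [key i (Finset.mem_Icc.mp hi).2, mul_assoc])]
  rw [← Finset.mul_sum]
  have hsplit : ∑ i ∈ Finset.range J, (-1 : ℝ) ^ i * (K.choose i : ℝ)
      + ∑ i ∈ Finset.Icc J K, (-1 : ℝ) ^ i * (K.choose i : ℝ)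
      = ∑ i ∈ Finset.range (K + 1), (-1 : ℝ) ^ i * (K.choose i : ℝ) := by
    rw [Finset.range_eq_Ico, Finset.range_eq_Ico, ← Finset.Ico_add_one_right_eq_Icc]
    exact Finset.sum_Ico_consecutive (m := 0) (n := J) (k := K + 1) (fun i => (-1 : ℝ) ^ i * (K.choose i : ℝ)) (by omega) (by omega)
  have h2 : ∑ i ∈ Finset.Icc J K, (-1 : ℝ) ^ i * (K.choose i : ℝ)
      = - ∑ i ∈ Finset.range J, (-1 : ℝ) ^ i * (K.choose i : ℝ) := by
    rw [alt_total K hK] at hsplit; linarith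
  have hpre := alt_prefix K hK (J - 1)
  rw [show J - 1 + 1 = J from by omega] at hpre
  rw [h2, hpre]
  have hKpow : (-1 : ℝ) ^ K = ((-1) ^ (K - J) * (-1) ^ (J - 1)) * (-1) := by
    rw [← pow_add, ← pow_succ]; congr 1; omega
  rw [hKpow]
  have h1 : ((-1 : ℝ)) ^ ((J - 1) * 2) = 1 := by
    rw [pow_mul]; norm_num
    exact neg_one_pow_eq_or ℝ (J - 1)
  ring_nf
  rw [h1, mul_one]
lemma vand_nat (s L M : ℕ) (hLs : L + 1 ≤ s) :
    ∑ r ∈ Finset.Icc (L + 1) s, s.choose r * M.choose (r - 1 - L)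
      = (s + M).choose (M + L + 1) := by
  rw [← Finset.Ico_add_one_right_eq_Icc, Finset.sum_Ico_eq_sum_range]
  have hn : s + 1 - (L + 1) = s - L := by omega
  rw [hn]
  have h1 : ∀ u ∈ Finset.range (s - L),
      s.choose (L + 1 + u) * M.choose (L + 1 + u - 1 - L) = s.choose (L + 1 + u) * M.choose u := by
    intro u hu
    rw [show L + 1 + u - 1 - L = u by omega]
  rw [Finset.sum_congr rfl h1]
  have h2 : ∀ u ∈ Finset.range (s - L),
      s.choose (L + 1 + u) * M.choose u = s.choose (s - L - 1 - u) * M.choose u := by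
    intro u hu
    simp only [Finset.mem_range] at hu
    congr 1
    rw [show s - L - 1 - u = s - (L + 1 + u) by omega]
    exact (Nat.choose_symm (by omega)).symm
  rw [Finset.sum_congr rfl h2]
  have h3 := Finset.sum_range_reflect (fun t => s.choose t * M.choose (s - L - 1 - t)) (s - L)
  have h4 : ∀ u ∈ Finset.range (s - L),
      s.choose (s - L - 1 - u) * M.choose (s - L - 1 - (s - L - 1 - u))
        = s.choose (s - L - 1 - u) * M.choose u := by
    intro u hu; simp only [Finset.mem_range] at hu
    rw [show s - L - 1 - (s - L - 1 - u) = u by omega]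
  rw [Finset.sum_congr rfl (fun u hu => (h4 u hu).symm), h3]
  have h5 : (s + M).choose (s - L - 1) = ∑ t ∈ Finset.range (s - L), s.choose t * M.choose (s - L - 1 - t) := by
    rw [Nat.add_choose_eq, Finset.Nat.sum_antidiagonal_eq_sum_range_succ_mk,
      show (s - L - 1).succ = s - L by omega]
  rw [← h5, show s - L - 1 = s + M - (M + L + 1) by omega]
  exact Nat.choose_symm (by omega)

lemma vand (s : ℕ) (k l : ℤ) (hk : 1 ≤ k) (hl : 0 ≤ l) :
    ∑ r ∈ Finset.Icc (l + 1) (s : ℤ), C (s : ℤ) r * C (k - 1) (r - 1) * C (r - 1) l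
      = C (k - 1) l * C ((s : ℤ) + k - 1 - l) k := by
  rcases lt_or_ge (k - 1) l with hkl | hkl
  · rw [C_eq_zero_of_lt hkl, zero_mul]
    refine Finset.sum_eq_zero fun r hr => ?_
    simp only [Finset.mem_Icc] at hr
    rcases lt_or_ge (k - 1) (r - 1) with h | h
    · rw [C_eq_zero_of_lt h, mul_zero, zero_mul]
    · rw [C_eq_zero_of_lt (by omega : r - 1 < l), mul_zero]
  · -- l ≤ k - 1
    have step : ∀ r ∈ Finset.Icc (l + 1) (s : ℤ),
        C (s : ℤ) r * C (k - 1) (r - 1) * C (r - 1) l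
          = C (k - 1) l * (C (s : ℤ) r * C (k - 1 - l) (r - 1 - l)) := by
      intro r hr
      have := C_trinomial (w := k - 1) (k := r - 1) (i := l) (by omega)
      calc C (s : ℤ) r * C (k - 1) (r - 1) * C (r - 1) l
          = C (s : ℤ) r * (C (k - 1) (r - 1) * C (r - 1) l) := by ring
        _ = C (s : ℤ) r * (C (k - 1) l * C (k - 1 - l) (r - 1 - l)) := by rw [← this]
        _ = C (k - 1) l * (C (s : ℤ) r * C (k - 1 - l) (r - 1 - l)) := by ring
    rw [Finset.sum_congr rfl step, ← Finset.mul_sum]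
    congr 1
    -- ∑ r ∈ Icc (l+1) s, C s r * C (k-1-l) (r-1-l) = C (s+k-1-l) k
    rcases lt_or_ge (s : ℤ) (l + 1) with hsl | hsl
    · rw [Finset.Icc_eq_empty (by omega), Finset.sum_empty,
        C_eq_zero_of_lt (by omega), ]
    · obtain ⟨L, hL⟩ : ∃ L : ℕ, l = (L : ℤ) := ⟨l.toNat, by omega⟩
      obtain ⟨M, hM⟩ : ∃ M : ℕ, k - 1 - l = (M : ℤ) := ⟨(k - 1 - l).toNat, by omega⟩
      subst hL
      have hLs : L + 1 ≤ s := by exact_mod_cast hsl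
      have hsum : ∑ r ∈ Finset.Icc ((L : ℤ) + 1) (s : ℤ), C (s : ℤ) r * C (k - 1 - L) (r - 1 - L)
          = ∑ r ∈ Finset.Icc (L + 1) s, (s.choose r : ℝ) * (M.choose (r - 1 - L) : ℝ) := by
        rw [show ((L : ℤ) + 1) = ((L + 1 : ℕ) : ℤ) by push_cast; ring, sum_Icc_cast]
        refine Finset.sum_congr rfl fun r hr => ?_
        simp only [Finset.mem_Icc] at hr
        rw [C_natCast, hM, show ((r : ℤ) - 1 - L) = ((r - 1 - L : ℕ) : ℤ) by omega, C_natCast]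
      have hcast : ∑ r ∈ Finset.Icc (L + 1) s, (s.choose r : ℝ) * (M.choose (r - 1 - L) : ℝ)
          = ((∑ r ∈ Finset.Icc (L + 1) s, s.choose r * M.choose (r - 1 - L) : ℕ) : ℝ) := by
        push_cast; rfl
      rw [hsum, hcast, vand_nat s L M hLs,
        show ((s : ℤ) + k - 1 - (L : ℤ)) = ((s + M : ℕ) : ℤ) by omega,
        show k = ((M + L + 1 : ℕ) : ℤ) by omega, C_natCast]
lemma expand_pow (x : ℝ) (n : ℕ) :
    (1 - x) ^ n = ∑ u ∈ Finset.range (n + 1), (-1 : ℝ) ^ u * x ^ u * (n.choose u : ℝ) := by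
  rw [show (1 - x) = (-x) + 1 by ring, add_pow]
  refine Finset.sum_congr rfl fun u hu => ?_
  rw [neg_pow]; ring

lemma bernstein_nat (w j : ℕ) (hj : 1 ≤ j) (hjw : j ≤ w) (x : ℝ) :
    ∑ i ∈ Finset.Icc j w, (w.choose i : ℝ) * x ^ i * (1 - x) ^ (w - i)
      = ∑ k ∈ Finset.Icc j w,
          (-1 : ℝ) ^ (k - j) * ((k - 1).choose (j - 1) : ℝ) * (w.choose k : ℝ) * x ^ k := by
  have stepB : ∀ i ∈ Finset.Icc j w,
      (w.choose i : ℝ) * x ^ i * (1 - x) ^ (w - i)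
        = ∑ k ∈ Finset.Icc i w, (w.choose i : ℝ) * ((-1 : ℝ) ^ (k - i) * x ^ k
            * ((w - i).choose (k - i) : ℝ)) := by
    intro i hi
    simp only [Finset.mem_Icc] at hi
    rw [expand_pow, Finset.mul_sum]
    refine Finset.sum_nbij' (fun u => i + u) (fun k => k - i) ?_ ?_ ?_ ?_ ?_
    · intro u hu; simp only [Finset.mem_range] at hu; simp only [Finset.mem_Icc]; omega
    · intro k hk; simp only [Finset.mem_Icc] at hk; simp only [Finset.mem_range]; omega
    · intro u hu; simp only [Finset.mem_range] at hu; omega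
    · intro k hk; simp only [Finset.mem_Icc] at hk; omega
    · intro u hu
      simp only [Finset.mem_range] at hu
      rw [show i + u - i = u by omega, pow_add]
      ring
  rw [Finset.sum_congr rfl stepB]
  rw [Finset.sum_comm' (t' := Finset.Icc j w) (s' := fun k => Finset.Icc j k)
    (fun i k => by simp only [Finset.mem_Icc]; omega)]
  refine Finset.sum_congr rfl fun k hk => ?_
  simp only [Finset.mem_Icc] at hk
  have stepD : ∀ i ∈ Finset.Icc j k,
      (w.choose i : ℝ) * ((-1 : ℝ) ^ (k - i) * x ^ k * ((w - i).choose (k - i) : ℝ))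
        = ((w.choose k : ℝ) * x ^ k) * ((-1 : ℝ) ^ (k - i) * (k.choose i : ℝ)) := by
    intro i hi
    simp only [Finset.mem_Icc] at hi
    have := Nat.choose_mul (n := w) (k := k) (s := i) (by omega)
    have hcast : (w.choose k : ℝ) * (k.choose i : ℝ) = (w.choose i : ℝ) * ((w - i).choose (k - i) : ℝ) := by
      exact_mod_cast congrArg (Nat.cast : ℕ → ℝ) this
    linear_combination (-((-1 : ℝ) ^ (k - i) * x ^ k)) * hcast
  rw [Finset.sum_congr rfl stepD, ← Finset.mul_sum, alt_suffix k j (by omega) hj]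
  ring
lemma neg_one_zpow_sq (n : ℤ) : (-1 : ℝ) ^ n * (-1 : ℝ) ^ n = 1 := by
  rw [← zpow_add₀ (by norm_num : (-1 : ℝ) ≠ 0), ← two_mul, zpow_mul]
  norm_num

lemma neg_one_zpow_aux (n : ℤ) : (-1 : ℝ) ^ (-1 - n) = -(-1 : ℝ) ^ n := by
  have h : (-1 : ℝ) ^ (-1 - n) * (-1 : ℝ) ^ n = (-1 : ℝ) ^ (-1 : ℤ) := by
    rw [← zpow_add₀ (by norm_num : (-1 : ℝ) ≠ 0)]; congr 1; ring
  have h2 : (-1 : ℝ) ^ (-1 : ℤ) = -1 := by norm_num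
  have h3 := neg_one_zpow_sq n
  calc (-1 : ℝ) ^ (-1 - n) = (-1 : ℝ) ^ (-1 - n) * ((-1 : ℝ) ^ n * (-1 : ℝ) ^ n) := by
        rw [h3, mul_one]
    _ = ((-1 : ℝ) ^ (-1 - n) * (-1 : ℝ) ^ n) * (-1 : ℝ) ^ n := by ring
    _ = -(-1 : ℝ) ^ n := by rw [h, h2]; ring

lemma step1 (b m : ℕ) (k r : ℤ) (hr : 1 ≤ r) :
    ∑ i ∈ Finset.Icc (0 : ℤ) (r - 1 - max (k - (m : ℤ)) 0), (-(b : ℝ)) ^ i * C (r - 1) i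
      = ∑ l ∈ Finset.Icc (max (k - (m : ℤ)) 0) (r - 1), (-(b : ℝ)) ^ (r - 1 - l) * C (r - 1) l := by
  refine Finset.sum_nbij' (fun i => r - 1 - i) (fun l => r - 1 - l) ?_ ?_ ?_ ?_ ?_
  · intro i hi; simp only [Finset.mem_Icc] at hi ⊢; omega
  · intro l hl; simp only [Finset.mem_Icc] at hl ⊢; omega
  · intro i hi; omega
  · intro l hl; omega
  · intro i hi
    simp only [Finset.mem_Icc] at hi
    rw [show r - 1 - (r - 1 - i) = i by omega]
    rw [C_symm i (by omega : (0:ℤ) ≤ r - 1)]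

lemma main_identity (b m s : ℕ) (hb : 2 ≤ b) (hm : 1 ≤ m) (hs : 1 ≤ s) (x : ℝ) :
    G b m s x
      = -((b : ℝ) - 1) * ∑ j ∈ Finset.Icc (1 : ℤ) (m : ℤ), (b : ℝ) ^ (j - 1) *
          ∑ k ∈ Finset.Icc j ((s : ℤ) + j - 1),
            (-1 : ℝ) ^ (k - j) * C (k - 1) (j - 1) * C ((s : ℤ) + j - 1) k * x ^ k := by
  have hB0 : (0 : ℝ) < (b : ℝ) := by positivity
  have hBne : ((b : ℝ)) ≠ 0 := ne_of_gt hB0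
  have hnB : (-(b : ℝ)) ≠ 0 := by simpa using hBne
  rw [G]
  have stage1 : ∀ k ∈ Finset.Icc (1 : ℤ) ((m : ℤ) + (s : ℤ) - 1),
      (∑ r ∈ Finset.Icc (1 : ℤ) (s : ℤ),
          C (s : ℤ) r * C (k - 1) (r - 1) * (((b : ℝ) - 1) / (-(b : ℝ)) ^ r) *
            ∑ i ∈ Finset.Icc (0 : ℤ) (r - 1 - max (k - (m : ℤ)) 0),
              (-(b : ℝ)) ^ i * C (r - 1) i) * ((b : ℝ) * x) ^ k
      = ∑ l ∈ Finset.Icc (max (k - (m : ℤ)) 0) ((s : ℤ) - 1),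
          (((b : ℝ) - 1) * (-(b : ℝ)) ^ (-1 - l) * ((b : ℝ) * x) ^ k) *
            (C (k - 1) l * C ((s : ℤ) + k - 1 - l) k) := by
    intro k hk
    simp only [Finset.mem_Icc] at hk
    rw [Finset.sum_mul]
    have h1 : ∀ r ∈ Finset.Icc (1 : ℤ) (s : ℤ),
        (C (s : ℤ) r * C (k - 1) (r - 1) * (((b : ℝ) - 1) / (-(b : ℝ)) ^ r) *
            ∑ i ∈ Finset.Icc (0 : ℤ) (r - 1 - max (k - (m : ℤ)) 0),
              (-(b : ℝ)) ^ i * C (r - 1) i) * ((b : ℝ) * x) ^ k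
        = ∑ l ∈ Finset.Icc (max (k - (m : ℤ)) 0) (r - 1),
            (((b : ℝ) - 1) * (-(b : ℝ)) ^ (-1 - l) * ((b : ℝ) * x) ^ k) *
              (C (s : ℤ) r * C (k - 1) (r - 1) * C (r - 1) l) := by
      intro r hr
      simp only [Finset.mem_Icc] at hr
      rw [step1 b m k r hr.1, Finset.mul_sum, Finset.sum_mul]
      refine Finset.sum_congr rfl fun l hl => ?_
      simp only [Finset.mem_Icc] at hl
      have hpow : (-(b : ℝ)) ^ (r - 1 - l) = (-(b : ℝ)) ^ r * (-(b : ℝ)) ^ (-1 - l) := by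
        rw [← zpow_add₀ hnB]; congr 1; ring
      have hrne : (-(b : ℝ)) ^ r ≠ 0 := zpow_ne_zero _ hnB
      rw [hpow]
      field_simp
    rw [Finset.sum_congr rfl h1]
    rw [Finset.sum_comm' (t' := Finset.Icc (max (k - (m : ℤ)) 0) ((s : ℤ) - 1))
      (s' := fun l => Finset.Icc (l + 1) (s : ℤ))
      (fun r l => by simp only [Finset.mem_Icc]; omega)]
    refine Finset.sum_congr rfl fun l hl => ?_
    simp only [Finset.mem_Icc] at hl
    rw [← Finset.mul_sum, vand s k l (by omega) (by omega)]
  rw [Finset.sum_congr rfl stage1]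
  -- transform the RHS into double-sum form
  have rhs_eq : -((b : ℝ) - 1) * ∑ j ∈ Finset.Icc (1 : ℤ) (m : ℤ), (b : ℝ) ^ (j - 1) *
          ∑ k ∈ Finset.Icc j ((s : ℤ) + j - 1),
            (-1 : ℝ) ^ (k - j) * C (k - 1) (j - 1) * C ((s : ℤ) + j - 1) k * x ^ k
      = ∑ j ∈ Finset.Icc (1 : ℤ) (m : ℤ), ∑ k ∈ Finset.Icc j ((s : ℤ) + j - 1),
          (((b : ℝ) - 1) * (-(b : ℝ)) ^ (-1 - (k - j)) * ((b : ℝ) * x) ^ k) *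
            (C (k - 1) (k - j) * C ((s : ℤ) + k - 1 - (k - j)) k) := by
    rw [Finset.mul_sum]
    refine Finset.sum_congr rfl fun j hj => ?_
    simp only [Finset.mem_Icc] at hj
    rw [← mul_assoc, Finset.mul_sum]
    refine Finset.sum_congr rfl fun k hk => ?_
    simp only [Finset.mem_Icc] at hk
    rw [show (s : ℤ) + k - 1 - (k - j) = (s : ℤ) + j - 1 by ring]
    rw [C_symm (k - j) (by omega : (0:ℤ) ≤ k - 1)]
    rw [show k - 1 - (k - j) = j - 1 by ring]
    rw [show (-(b : ℝ)) = (-1) * (b : ℝ) by ring, mul_zpow, mul_zpow]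
    rw [neg_one_zpow_aux (k - j)]
    have hBpow : (b : ℝ) ^ (-1 - (k - j)) * (b : ℝ) ^ k = (b : ℝ) ^ (j - 1) := by
      rw [← zpow_add₀ hBne]; congr 1; ring
    linear_combination (((b : ℝ) - 1) * (-1 : ℝ) ^ (k - j) * C (k - 1) (j - 1)
      * C ((s : ℤ) + j - 1) k * x ^ k) * hBpow
  rw [rhs_eq]
  -- global bijection (k, l) ↦ (j := k - l, k)
  rw [Finset.sum_sigma' (Finset.Icc (1 : ℤ) ((m : ℤ) + (s : ℤ) - 1))
    (fun k => Finset.Icc (max (k - (m : ℤ)) 0) ((s : ℤ) - 1)),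
    Finset.sum_sigma' (Finset.Icc (1 : ℤ) (m : ℤ))
    (fun j => Finset.Icc j ((s : ℤ) + j - 1))]
  refine Finset.sum_bij_ne_zero (fun p _ _ => ⟨p.1 - p.2, p.1⟩) ?_ ?_ ?_ ?_
  · -- membership
    rintro ⟨k, l⟩ hp hne
    simp only [Finset.mem_sigma, Finset.mem_Icc] at hp ⊢
    have hlk : l ≤ k - 1 := by
      by_contra hc
      push_neg at hc
      rw [C_eq_zero_of_lt (by omega : k - 1 < l), zero_mul, mul_zero] at hne
      exact hne rfl
    omega
  · -- injectivity
    rintro ⟨k1, l1⟩ h11 h12 ⟨k2, l2⟩ h21 h22 heq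
    simp only [Sigma.ext_iff, heq_eq_eq] at heq ⊢
    omega
  · -- surjectivity
    rintro ⟨j, k⟩ hq hgne
    simp only [Finset.mem_sigma, Finset.mem_Icc] at hq
    refine ⟨⟨k, k - j⟩, ?_, ?_, ?_⟩
    · simp only [Finset.mem_sigma, Finset.mem_Icc]
      omega
    · exact hgne
    · show (⟨k - (k - j), k⟩ : (_ : ℤ) × ℤ) = ⟨j, k⟩
      rw [show k - (k - j) = j by ring]
  · -- values
    rintro ⟨k, l⟩ _ _
    simp only
    rw [show k - (k - l) = l by ring]
lemma inner_nonneg (s : ℕ) (hs : 1 ≤ s) (j : ℤ) (hj : 1 ≤ j) (x : ℝ)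
    (hx0 : 0 ≤ x) (hx1 : x ≤ 1) :
    0 ≤ ∑ k ∈ Finset.Icc j ((s : ℤ) + j - 1),
        (-1 : ℝ) ^ (k - j) * C (k - 1) (j - 1) * C ((s : ℤ) + j - 1) k * x ^ k := by
  obtain ⟨J, rfl⟩ : ∃ J : ℕ, j = (J : ℤ) := ⟨j.toNat, by omega⟩
  have hJ : 1 ≤ J := by exact_mod_cast hj
  have hbound : (s : ℤ) + (J : ℤ) - 1 = ((s + J - 1 : ℕ) : ℤ) := by push_cast [hJ]; omega
  rw [hbound, sum_Icc_cast J (s + J - 1)]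
  have hterm : ∀ k ∈ Finset.Icc J (s + J - 1),
      (-1 : ℝ) ^ ((k : ℤ) - (J : ℤ)) * C ((k : ℤ) - 1) ((J : ℤ) - 1)
          * C (((s + J - 1 : ℕ) : ℤ)) (k : ℤ) * x ^ (k : ℤ)
        = (-1 : ℝ) ^ (k - J) * (((k - 1).choose (J - 1) : ℕ) : ℝ)
            * (((s + J - 1).choose k : ℕ) : ℝ) * x ^ (k : ℕ) := by
    intro k hk
    simp only [Finset.mem_Icc] at hk
    rw [show ((k : ℤ) - (J : ℤ)) = ((k - J : ℕ) : ℤ) by omega, zpow_natCast,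
      show ((k : ℤ) - 1) = ((k - 1 : ℕ) : ℤ) by omega,
      show ((J : ℤ) - 1) = ((J - 1 : ℕ) : ℤ) by omega,
      C_natCast, C_natCast, zpow_natCast]
  rw [Finset.sum_congr rfl hterm, ← bernstein_nat (s + J - 1) J hJ (by omega) x]
  refine Finset.sum_nonneg fun i hi => ?_
  have h1 : (0 : ℝ) ≤ ((s + J - 1).choose i : ℝ) := by positivity
  have h2 : (0 : ℝ) ≤ x ^ i := pow_nonneg hx0 i
  have h3 : (0 : ℝ) ≤ (1 - x) ^ (s + J - 1 - i) := pow_nonneg (by linarith) _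
  exact mul_nonneg (mul_nonneg h1 h2) h3

theorem G_nonpositive (b m s : ℕ) (hb : 2 ≤ b) (hm : 1 ≤ m) (hs : 1 ≤ s)
    (x : ℝ) (hx0 : 0 ≤ x) (hx1 : x < 1) :
    G b m s x ≤ 0 := by
  rw [main_identity b m s hb hm hs x]
  have hb1 : (1 : ℝ) ≤ (b : ℝ) := by exact_mod_cast Nat.one_le_of_lt hb
  have hsum : 0 ≤ ∑ j ∈ Finset.Icc (1 : ℤ) (m : ℤ), (b : ℝ) ^ (j - 1) *
      ∑ k ∈ Finset.Icc j ((s : ℤ) + j - 1),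
        (-1 : ℝ) ^ (k - j) * C (k - 1) (j - 1) * C ((s : ℤ) + j - 1) k * x ^ k := by
    refine Finset.sum_nonneg fun j hj => ?_
    simp only [Finset.mem_Icc] at hj
    exact mul_nonneg (zpow_nonneg (by positivity) _)
      (inner_nonneg s hs j hj.1 x hx0 (le_of_lt hx1))
  have hneg : -((b : ℝ) - 1) ≤ 0 := by linarith
  exact mul_nonpos_of_nonpos_of_nonneg hneg hsum
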